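/- Let p : ℂ → ℂ be a polynomial, J ⊆ ℂ a nonempty compact set with p(J) ⊆ J, and (a,b,c) ∈ ℂ³ with (a,b,c) ≠ (0,0,0) and a y² + b y + c ≠ 0 for every y ∈ J. For T ∈ ℂ, let F_T(z,w) = (p(z), w² + T(a z² + b z + c)). Then there exists T₀ > 0 such that for all T with |T| ≥ T₀ there exists a real R with R < inf_{y ∈ J} |T(a y² + b y + c)| such that for every z ∈ J and every w ∈ ℂ: if the forward orbit of (z,w) under F_T is bounded in ℂ², then |w| ≤ R; moreover one may take R = 2√( sup_{y ∈ J} |T(a y² + b y + c)| ). -/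

import Mathlib

set_option maxHeartbeats 1000000

/-- For `F_T(z,w) = (p(z), w² + T(a z² + b z + c))` with `a X² + b X + c` nonvanishing
on a compact `p`-invariant set `J`: for `|T|` large there is an escape radius
`R = 2√(sup_{y∈J} |T(a y² + b y + c)|)` with `R < inf_{y∈J} |T(a y² + b y + c)|`, such
that every point `(z,w)` over `J` with bounded orbit satisfies `|w| ≤ R`. -/
theorem filled_julia_in_small_disk
    (p : Polynomial ℂ) (J : Set ℂ) (hJne : J.Nonempty) (hJc : IsCompact J)
    (hJinv : ∀ z ∈ J, p.eval z ∈ J)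
    (a b c : ℂ) (habc : (a, b, c) ≠ (0, 0, 0))
    (hroots : ∀ y ∈ J, a * y ^ 2 + b * y + c ≠ 0) :
    ∃ T₀ : ℝ, 0 < T₀ ∧ ∀ T : ℂ, T₀ ≤ ‖T‖ →
      ∃ R : ℝ,
        R < sInf ((fun y => ‖T * (a * y ^ 2 + b * y + c)‖) '' J) ∧
        (∀ z ∈ J, ∀ w : ℂ,
          Bornology.IsBounded (Set.range fun n =>
            (fun q : ℂ × ℂ =>
              (p.eval q.1, q.2 ^ 2 + T * (a * q.1 ^ 2 + b * q.1 + c)))^[n] (z, w)) →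
          ‖w‖ ≤ R) ∧
        R = 2 * Real.sqrt (sSup ((fun y => ‖T * (a * y ^ 2 + b * y + c)‖) '' J)) := by
  classical
  set f : ℂ → ℝ := fun y => ‖a * y ^ 2 + b * y + c‖ with hf
  have hfc : Continuous f := by
    apply continuous_norm.comp
    continuity
  obtain ⟨y₀, hy₀J, hy₀⟩ := hJc.exists_isMinOn hJne hfc.continuousOn
  obtain ⟨y₁, hy₁J, hy₁⟩ := hJc.exists_isMaxOn hJne hfc.continuousOn
  set m := f y₀ with hm
  set M := f y₁ with hM
  have hm0 : 0 < m := by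
    have := hroots y₀ hy₀J
    simpa [hm, hf, norm_pos_iff] using this
  have hmM : m ≤ M := hy₁ hy₀J
  have hM0 : 0 < M := lt_of_lt_of_le hm0 hmM
  refine ⟨max (4 / m) (4 * M / m ^ 2) + 1, by positivity, ?_⟩
  intro T hT
  have hTpos : 0 < ‖T‖ := lt_of_lt_of_le (by positivity) hT
  have hT1 : 4 / m ≤ ‖T‖ := by
    have := le_max_left (4 / m) (4 * M / m ^ 2)
    linarith
  have hT2 : 4 * M / m ^ 2 < ‖T‖ := by
    have := le_max_right (4 / m) (4 * M / m ^ 2)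
    linarith
  have hTm : 4 ≤ ‖T‖ * m := by
    rw [div_le_iff₀ hm0] at hT1; linarith
  have hTM : 4 * M < ‖T‖ * m ^ 2 := by
    rw [div_lt_iff₀ (by positivity)] at hT2; linarith
  set S := ‖T‖ * M with hS
  have hS0 : 0 ≤ S := by positivity
  set R := 2 * Real.sqrt S with hR
  have hR0 : 0 ≤ R := by positivity
  have hRsq : R ^ 2 = 4 * S := by
    rw [hR, mul_pow, Real.sq_sqrt hS0]; ring
  have hS4 : 4 ≤ S := le_trans hTm (by nlinarith)
  have hR4 : 4 ≤ R := by
    have h2 : Real.sqrt 4 ≤ Real.sqrt S := Real.sqrt_le_sqrt hS4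
    have h4 : Real.sqrt 4 = 2 := by
      rw [show (4 : ℝ) = 2 ^ 2 by norm_num, Real.sqrt_sq (by norm_num)]
    rw [hR]; linarith [h2, h4 ▸ h2]
  -- the image sets
  have himg : ∀ y, ‖T * (a * y ^ 2 + b * y + c)‖ = ‖T‖ * f y := by
    intro y; simp [hf, map_mul]
  have hRlt : R < ‖T‖ * m := by
    have hsq : R ^ 2 < (‖T‖ * m) ^ 2 := by
      rw [hRsq, hS]; nlinarith [hTpos]
    exact lt_of_pow_lt_pow_left₀ 2 (by positivity) hsq
  refine ⟨R, ?_, ?_, ?_⟩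
  · refine lt_of_lt_of_le hRlt (le_csInf (hJne.image _) ?_)
    rintro x ⟨y, hyJ, rfl⟩
    simp only [himg y]
    exact mul_le_mul_of_nonneg_left (hy₀ hyJ) hTpos.le
  · intro z hz w hbd
    by_contra hw
    push_neg at hw
    set F : ℂ × ℂ → ℂ × ℂ := fun q =>
      (p.eval q.1, q.2 ^ 2 + T * (a * q.1 ^ 2 + b * q.1 + c)) with hF
    have key : ∀ n, (F^[n] (z, w)).1 ∈ J ∧
        2 ^ n * ‖w‖ ≤ ‖(F^[n] (z, w)).2‖ := by
      intro n
      induction n with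
      | zero => simpa using hz
      | succ n ih =>
        rw [Function.iterate_succ_apply']
        rcases hq : F^[n] (z, w) with ⟨zn, wn⟩
        rw [hq] at ih
        obtain ⟨hzn, hwn⟩ := ih
        simp only [hF]
        refine ⟨hJinv _ hzn, ?_⟩
        have htri : ‖wn‖ ^ 2 - ‖T * (a * zn ^ 2 + b * zn + c)‖ ≤
            ‖wn ^ 2 + T * (a * zn ^ 2 + b * zn + c)‖ := by
          have h := norm_sub_norm_le (wn ^ 2) (-(T * (a * zn ^ 2 + b * zn + c)))
          simpa [sub_neg_eq_add, norm_pow] using h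
        have hbound : ‖T * (a * zn ^ 2 + b * zn + c)‖ ≤ S := by
          rw [himg zn, hS]
          exact mul_le_mul_of_nonneg_left (hy₁ hzn) hTpos.le
        have hA0 : (0 : ℝ) ≤ ‖w‖ := norm_nonneg _
        have h2n : (1 : ℝ) ≤ 2 ^ n := one_le_pow₀ (by norm_num : (1:ℝ) ≤ 2)
        set u := ‖wn‖ with hu
        have hAu : ‖w‖ ≤ 2 ^ n * ‖w‖ :=
          le_mul_of_one_le_left hA0 h2n
        have hRu : R < u := by linarith
        have hu4 : 4 < u := by linarith
        have hRsq' : R ^ 2 ≤ u ^ 2 := pow_le_pow_left₀ hR0 hRu.le 2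
        have h1 : S ≤ u ^ 2 / 4 := by linarith
        have h4 : 2 * u ≤ u ^ 2 - u ^ 2 / 4 := by nlinarith
        have hgoal : 2 ^ (n + 1) * ‖w‖ = 2 * (2 ^ n * ‖w‖) := by ring
        rw [hgoal]
        linarith [htri, hbound]
    obtain ⟨C, hC⟩ := Bornology.IsBounded.exists_norm_le hbd
    have hCn : ∀ n : ℕ, 2 ^ n * ‖w‖ ≤ C := by
      intro n
      have h1 := (key n).2
      have h2 : ‖(F^[n] (z, w)).2‖ ≤ ‖F^[n] (z, w)‖ := by
        exact norm_snd_le _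
      have h3 : ‖F^[n] (z, w)‖ ≤ C := hC _ ⟨n, rfl⟩
      linarith
    have hw0 : 0 < ‖w‖ := by linarith [hw, hR4]
    obtain ⟨n, hn⟩ := pow_unbounded_of_one_lt (C / ‖w‖) (by norm_num : (1:ℝ) < 2)
    rw [div_lt_iff₀ hw0] at hn
    exact absurd (hCn n) (by linarith)
  · have hsup : sSup ((fun y => ‖T * (a * y ^ 2 + b * y + c)‖) '' J) = S := by
      refine le_antisymm (csSup_le (hJne.image _) ?_) (le_csSup ?_ ?_)
      · rintro x ⟨y, hyJ, rfl⟩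
        simp only [himg y]
        exact mul_le_mul_of_nonneg_left (hy₁ hyJ) hTpos.le
      · refine ⟨S, ?_⟩
        rintro x ⟨y, hyJ, rfl⟩
        simp only [himg y]
        exact mul_le_mul_of_nonneg_left (hy₁ hyJ) hTpos.le
      · exact ⟨y₁, hy₁J, himg y₁⟩
    rw [hsup]
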